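/- arXiv:1909.12067 — 2 statements merged into one kernel-verified Lean document; each statement's English description precedes it below -/
import Mathlib

section
/- Let g : [0,∞) → [0,∞) be differentiable and satisfy g'(t) ≤ C·g(t)·log(K/g(t)) for positive constants C, K, with g(0) ≤ K/2. Then there exists a time t₀ > 0 depending only on C and K such that for all t ∈ [0, t₀], g(t) ≤ (1/K)^{e^{-Ct} - 1} · g(0)^{e^{-Ct}}. -/
open Finset
open scoped Classical

/-- Expectation with respect to the uniform measure on `{-1,1}^n` (points encoded as
`Fin n → Bool`). -/
noncomputable def cubeE (n : ℕ) (g : (Fin n → Bool) → ℝ) : ℝ :=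
  (∑ x : Fin n → Bool, g x) / 2 ^ n

/-- Flip the `i`-th bit. -/
def flipBitAt {n : ℕ} (y : Fin n → Bool) (i : Fin n) : Fin n → Bool :=
  Function.update y i (!(y i))

/-- Influence of the `i`-th coordinate: `μ({y : f y ≠ f (y^{⊕i})})`. -/
noncomputable def influence (n : ℕ) (f : (Fin n → Bool) → ℝ) (i : Fin n) : ℝ :=
  cubeE n (fun y => if f y ≠ f (flipBitAt y i) then 1 else 0)

/-- Variance with respect to the uniform measure. -/
noncomputable def cubeVar (n : ℕ) (f : (Fin n → Bool) → ℝ) : ℝ :=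
  cubeE n (fun y => (f y - cubeE n f) ^ 2)

/-- `f` is Boolean (takes values in `{-1,1}`). -/
def IsBooleanPM (n : ℕ) (f : (Fin n → Bool) → ℝ) : Prop :=
  ∀ y, f y = 1 ∨ f y = -1

/-- `true ↦ 1`, `false ↦ -1`. -/
noncomputable def toR (b : Bool) : ℝ := if b then 1 else -1

/-- Discrete derivative `∂_i f (y) = (f(y^{i→1}) - f(y^{i→-1}))/2`. -/
noncomputable def dderiv (n : ℕ) (f : (Fin n → Bool) → ℝ) (i : Fin n)
    (y : Fin n → Bool) : ℝ :=
  (f (Function.update y i true) - f (Function.update y i false)) / 2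

/-- Sensitivity `h_f(y) = #{i : f y ≠ f (y^{⊕i})}`. -/
noncomputable def sens (n : ℕ) (f : (Fin n → Bool) → ℝ) (y : Fin n → Bool) : ℕ :=
  (Finset.univ.filter (fun i : Fin n => f y ≠ f (flipBitAt y i))).card

/-- Fourier coefficient `f̂(S) = E[f(y) ∏_{i∈S} y_i]`. -/
noncomputable def cubeFourier (n : ℕ) (f : (Fin n → Bool) → ℝ) (S : Finset (Fin n)) : ℝ :=
  cubeE n (fun y => f y * ∏ i ∈ S, toR (y i))

/-- `f` is monotone (with `false ↦ -1 ≤ 1 ↤ true`). -/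
def MonoBF (n : ℕ) (f : (Fin n → Bool) → ℝ) : Prop :=
  ∀ x y : Fin n → Bool, (∀ i, x i ≤ y i) → f x ≤ f y




/-- Comparison with a strict supersolution. -/
lemma key_comparison (C K b C' : ℝ) (hC : 0 < C) (hK : 0 < K)
    (g : ℝ → ℝ) (hdiff : Differentiable ℝ g)
    (hineq : ∀ t, 0 ≤ t → deriv g t ≤ C * g t * Real.log (K / g t))
    (hb0 : 0 < b) (hgb : g 0 < b) (hbK : b < K) (hC' : C < C') :
    ∀ T, 0 ≤ T → g T ≤ Real.exp (Real.log K + Real.exp (-C' * T) * (Real.log b - Real.log K)) := by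
  set φ : ℝ → ℝ := fun t => Real.exp (Real.log K + Real.exp (-C' * t) * (Real.log b - Real.log K)) with hφdef
  have hφpos : ∀ t, 0 < φ t := fun t => Real.exp_pos _
  have hlogφ : ∀ t, Real.log (φ t) = Real.log K + Real.exp (-C' * t) * (Real.log b - Real.log K) :=
    fun t => Real.log_exp _
  have hlogbK : Real.log b < Real.log K := Real.log_lt_log hb0 hbK
  have hlogKφ : ∀ t, Real.log (K / φ t) = Real.exp (-C' * t) * (Real.log K - Real.log b) := by
    intro t
    rw [Real.log_div (ne_of_gt hK) (ne_of_gt (hφpos t)), hlogφ]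
    ring
  have hφK : ∀ t, φ t < K := by
    intro t
    have h1 : Real.log (φ t) < Real.log K := by
      rw [hlogφ]
      nlinarith [Real.exp_pos (-C' * t)]
    calc φ t = Real.exp (Real.log (φ t)) := (Real.exp_log (hφpos t)).symm
      _ < Real.exp (Real.log K) := Real.exp_lt_exp.2 h1
      _ = K := Real.exp_log hK
  have hφderiv : ∀ s, HasDerivAt φ (C' * φ s * Real.log (K / φ s)) s := by
    intro s
    have h1 : HasDerivAt (fun t : ℝ => -C' * t) (-C') s := by
      simpa using (hasDerivAt_id s).const_mul (-C')
    have h2 := h1.exp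
    have h3 := (h2.mul_const (Real.log b - Real.log K)).const_add (Real.log K)
    have h4 := h3.exp
    convert h4 using 1
    rw [hlogKφ]
    ring
  have hφcont : Continuous φ := by fun_prop
  have hφ0 : φ 0 = b := by
    have h : Real.log K + Real.exp (-C' * 0) * (Real.log b - Real.log K) = Real.log b := by
      simp
    simp only [hφdef]
    rw [h, Real.exp_log hb0]
  intro T hT
  by_contra hcon
  push_neg at hcon
  -- crossing set
  set S : Set ℝ := Set.Icc 0 T ∩ {t | φ t ≤ g t} with hS
  have hTne : T ∈ S := ⟨⟨hT, le_refl T⟩, le_of_lt hcon⟩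
  have hSne : S.Nonempty := ⟨T, hTne⟩
  have hSbdd : BddBelow S := ⟨0, fun x hx => hx.1.1⟩
  have hSclosed : IsClosed S := by
    apply IsClosed.inter isClosed_Icc
    exact isClosed_le hφcont hdiff.continuous
  set s := sInf S with hs
  have hsS : s ∈ S := hSclosed.csInf_mem hSne hSbdd
  have hs0 : 0 ≤ s := hsS.1.1
  have h0S : (0:ℝ) ∉ S := by
    intro h
    have := h.2
    simp only [Set.mem_setOf_eq, hφ0] at this
    linarith
  have hspos : 0 < s := lt_of_le_of_ne hs0 (fun h => h0S (h ▸ hsS))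
  have hlt : ∀ t, 0 ≤ t → t < s → g t < φ t := by
    intro t ht hts
    by_contra h
    push_neg at h
    have htS : t ∈ S := ⟨⟨ht, le_trans hts.le hsS.1.2⟩, h⟩
    exact absurd (csInf_le hSbdd htS) (not_le.2 hts)
  -- g s = φ s
  have heq : g s = φ s := by
    refine le_antisymm ?_ hsS.2
    by_contra h
    push_neg at h
    have hcont : ContinuousAt (fun t => g t - φ t) s := (hdiff.continuous.sub hφcont).continuousAt
    have hev : ∀ᶠ t in nhds s, 0 < g t - φ t := by
      have h0 : g s - φ s ∈ Set.Ioi (0:ℝ) := by simp; linarith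
      exact (hcont.eventually (isOpen_Ioi.eventually_mem h0)).mono (fun x hx => hx)
    have hev2 : ∀ᶠ t in nhdsWithin s (Set.Iio s), 0 < g t - φ t ∧ 0 < t := by
      apply Filter.Eventually.and
      · exact (hev.filter_mono nhdsWithin_le_nhds)
      · exact ((isOpen_Ioi.eventually_mem (show (0:ℝ) < s from hspos)).filter_mono nhdsWithin_le_nhds).mono (fun x hx => hx)
    have : ∃ t, (0 < g t - φ t ∧ 0 < t) ∧ t ∈ Set.Iio s := by
      have := hev2.and (eventually_mem_nhdsWithin (s := Set.Iio s))
      exact this.exists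
    obtain ⟨t, ⟨hgt, ht0⟩, hts⟩ := this
    exact absurd (hlt t ht0.le hts) (by linarith)
  -- derivative of g - φ at s is nonneg (left slopes)
  have hgd : HasDerivAt g (deriv g s) s := (hdiff s).hasDerivAt
  have hhd : HasDerivAt (fun t => g t - φ t) (deriv g s - C' * φ s * Real.log (K / φ s)) s :=
    hgd.sub (hφderiv s)
  have hslope := hasDerivAt_iff_tendsto_slope.1 hhd
  have hslope' : Filter.Tendsto (slope (fun t => g t - φ t) s) (nhdsWithin s (Set.Iio s))
      (nhds (deriv g s - C' * φ s * Real.log (K / φ s))) :=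
    hslope.mono_left (nhdsWithin_mono s (fun x hx => ne_of_lt hx))
  have hnonneg : 0 ≤ deriv g s - C' * φ s * Real.log (K / φ s) := by
    refine ge_of_tendsto hslope' ?_
    have hev2 : ∀ᶠ t in nhdsWithin s (Set.Iio s), 0 < t ∧ t < s := by
      apply Filter.Eventually.and
      · exact ((isOpen_Ioi.eventually_mem (show (0:ℝ) < s from hspos)).filter_mono nhdsWithin_le_nhds).mono (fun x hx => hx)
      · exact eventually_mem_nhdsWithin (s := Set.Iio s)
    refine hev2.mono (fun t ht => ?_)
    have h1 : g t - φ t < 0 := sub_neg.2 (hlt t ht.1.le ht.2)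
    have h2 : g s - φ s = 0 := by rw [heq]; ring
    rw [slope_def_field]
    rw [div_nonneg_iff]
    right
    constructor
    · rw [h2]; linarith
    · linarith [ht.2]
  -- but derivative is negative
  have hlogpos : 0 < Real.log (K / φ s) := by
    rw [hlogKφ]
    have := Real.exp_pos (-C' * s)
    nlinarith
  have hderivlt : deriv g s < C' * φ s * Real.log (K / φ s) := by
    calc deriv g s ≤ C * g s * Real.log (K / g s) := hineq s hs0
      _ = C * φ s * Real.log (K / φ s) := by rw [heq]
      _ < C' * φ s * Real.log (K / φ s) := by
          have h1 := hφpos s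
          nlinarith [mul_pos (mul_pos (sub_pos.2 hC') h1) hlogpos]
  linarith

/-- Gronwall-type lemma for the differential inequality g' <= C g log(K/g). -/
theorem differential_inequality (C K : ℝ) (hC : 0 < C) (hK : 0 < K) :
    ∃ t₀ > (0:ℝ), ∀ g : ℝ → ℝ,
      (∀ t, 0 ≤ t → 0 ≤ g t) → Differentiable ℝ g →
      (∀ t, 0 ≤ t → deriv g t ≤ C * g t * Real.log (K / g t)) →
      g 0 ≤ K / 2 →
      ∀ t ∈ Set.Icc (0:ℝ) t₀,
        g t ≤ (1 / K) ^ (Real.exp (-C * t) - 1) * g 0 ^ Real.exp (-C * t) := by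
  refine ⟨1, one_pos, ?_⟩
  intro g hg0 hdiff hineq hghalf t ht
  obtain ⟨ht0, _⟩ := ht
  have hA : (0:ℝ) < Real.exp (-C * t) := Real.exp_pos _
  have hg00 : 0 ≤ g 0 := hg0 0 le_rfl
  set f : ℝ → ℝ := fun δ =>
    Real.exp (Real.log K + Real.exp (-(C + δ) * t) * (Real.log (g 0 + δ) - Real.log K)) with hfdef
  have hbound : ∀ δ : ℝ, 0 < δ → δ < K / 2 → g t ≤ f δ := by
    intro δ hδ hδK
    exact key_comparison C K (g 0 + δ) (C + δ) hC hK g hdiff hineq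
      (by linarith) (by linarith) (by linarith) (by linarith) t ht0
  have hev : ∀ᶠ δ in nhdsWithin (0:ℝ) (Set.Ioi 0), g t ≤ f δ := by
    filter_upwards [Ioo_mem_nhdsGT_of_mem (show (0:ℝ) ∈ Set.Ico (0:ℝ) (K/2) from ⟨le_rfl, by positivity⟩)] with δ hδ
    exact hbound δ hδ.1 hδ.2
  rcases eq_or_lt_of_le hg00 with h0 | h0
  · -- g 0 = 0
    have hrhs : (1 / K) ^ (Real.exp (-C * t) - 1) * g 0 ^ Real.exp (-C * t) = 0 := by
      rw [← h0, Real.zero_rpow (ne_of_gt hA), mul_zero]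
    rw [hrhs]
    have htend : Filter.Tendsto f (nhdsWithin (0:ℝ) (Set.Ioi 0)) (nhds 0) := by
      have h1 : Filter.Tendsto (fun δ : ℝ => Real.exp (-(C + δ) * t))
          (nhdsWithin (0:ℝ) (Set.Ioi 0)) (nhds (Real.exp (-C * t))) := by
        have : ContinuousAt (fun δ : ℝ => Real.exp (-(C + δ) * t)) 0 := by fun_prop
        simpa using this.continuousWithinAt.tendsto
      have h2 : Filter.Tendsto (fun δ : ℝ => Real.log (g 0 + δ) - Real.log K)
          (nhdsWithin (0:ℝ) (Set.Ioi 0)) Filter.atBot := by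
        have hlog : Filter.Tendsto (fun δ : ℝ => Real.log (g 0 + δ))
            (nhdsWithin (0:ℝ) (Set.Ioi 0)) Filter.atBot := by
          simp only [← h0, zero_add]
          exact Real.tendsto_log_nhdsGT_zero
        exact Filter.tendsto_atBot_add_const_right _ _ hlog
      have h3 := Filter.Tendsto.pos_mul_atBot hA h1 h2
      have h4 := Filter.tendsto_atBot_add_const_left _ (Real.log K) h3
      exact Real.tendsto_exp_atBot.comp h4
    exact ge_of_tendsto htend hev
  · -- g 0 > 0
    have hcont : ContinuousAt f 0 := by
      have h1 : ContinuousAt (fun δ : ℝ => Real.log (g 0 + δ)) 0 := by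
        have h2 : ContinuousAt Real.log (g 0 + 0) := Real.continuousAt_log (by linarith)
        exact h2.comp (by fun_prop)
      simp only [hfdef]
      apply Real.continuous_exp.continuousAt.comp
      exact (continuousAt_const.add (((by fun_prop : ContinuousAt (fun δ : ℝ =>
        Real.exp (-(C + δ) * t)) 0)).mul (h1.sub continuousAt_const)))
    have htend : Filter.Tendsto f (nhdsWithin (0:ℝ) (Set.Ioi 0)) (nhds (f 0)) :=
      hcont.continuousWithinAt.tendsto
    have hval : f 0 = (1 / K) ^ (Real.exp (-C * t) - 1) * g 0 ^ Real.exp (-C * t) := by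
      rw [Real.rpow_def_of_pos (by positivity : (0:ℝ) < 1 / K),
        Real.rpow_def_of_pos h0, ← Real.exp_add]
      simp only [hfdef, add_zero]
      rw [Real.log_div one_ne_zero (ne_of_gt hK), Real.log_one]
      congr 1
      ring
    rw [← hval]
    exact ge_of_tendsto htend hev
end

section
/- Let K ≥ 1 and let G : [0,K] → (0,∞) be a decreasing log-convex function. Set v = ∫_0^K e^{-2s} G(s) ds and assume v > G(K). Then for all 0 ≤ r < K, ∫_0^r e^{-2s} G(s) ds ≥ v·(1 - (G(K)/v)^{r/K}). -/
open Finset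
open scoped Classical

/-- Integral lower bound for decreasing log-convex functions. -/
theorem log_convex_integral_bound (K : ℝ) (hK : 1 ≤ K) (G : ℝ → ℝ)
    (hGpos : ∀ s ∈ Set.Icc (0:ℝ) K, 0 < G s)
    (hGdec : AntitoneOn G (Set.Icc (0:ℝ) K))
    (hGlc : ConvexOn ℝ (Set.Icc (0:ℝ) K) (fun s => Real.log (G s)))
    (v : ℝ) (hv : v = ∫ s in (0:ℝ)..K, Real.exp (-2 * s) * G s)
    (hvG : G K < v) :
    ∀ r : ℝ, 0 ≤ r → r < K →
      v * (1 - (G K / v) ^ (r / K)) ≤ ∫ s in (0:ℝ)..r, Real.exp (-2 * s) * G s := by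
  intro r hr hrK
  have hK0 : (0:ℝ) < K := lt_of_lt_of_le one_pos hK
  have hKmem : K ∈ Set.Icc (0:ℝ) K := ⟨hK0.le, le_rfl⟩
  have hGK : 0 < G K := hGpos K hKmem
  have hv0 : 0 < v := hGK.trans hvG
  set t : ℝ := r / K with ht
  have ht0 : 0 ≤ t := div_nonneg hr hK0.le
  have ht1 : t < 1 := (div_lt_one hK0).2 hrK
  have h1t : 0 < 1 - t := by linarith
  have htK : t * K = r := div_mul_cancel₀ r hK0.ne'
  set φ : ℝ → ℝ := fun s => Real.exp (-2 * s) * G s with hφ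
  have hφpos : ∀ u ∈ Set.Icc (0:ℝ) K, 0 < φ u := fun u hu =>
    mul_pos (Real.exp_pos _) (hGpos u hu)
  -- integrability of φ on subintervals of [0, K]
  have hφint : ∀ a b : ℝ, a ∈ Set.Icc (0:ℝ) K → b ∈ Set.Icc (0:ℝ) K →
      IntervalIntegrable φ MeasureTheory.volume a b := by
    intro a b ha hb
    exact ((hGdec.mono (Set.uIcc_subset_Icc ha hb)).intervalIntegrable).continuousOn_mul
      (Real.continuous_exp.comp (continuous_const.mul continuous_id)).continuousOn
  have hmem0 : (0:ℝ) ∈ Set.Icc (0:ℝ) K := ⟨le_rfl, hK0.le⟩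
  have hrmem : r ∈ Set.Icc (0:ℝ) K := ⟨hr, hrK.le⟩
  -- the affine map u ↦ (1-t)u + tK maps [0,K] into [0,K]
  have haff : ∀ u ∈ Set.Icc (0:ℝ) K, (1-t)*u + t*K ∈ Set.Icc (0:ℝ) K := by
    intro u hu
    constructor
    · have := hu.1; nlinarith
    · nlinarith [hu.2]
  set C : ℝ := v ^ (1-t) * (G K) ^ t with hC
  have hC0 : 0 ≤ C := mul_nonneg (Real.rpow_nonneg hv0.le _) (Real.rpow_nonneg hGK.le _)
  -- pointwise bound
  have hpt : ∀ u ∈ Set.Icc (0:ℝ) K,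
      φ ((1-t)*u + t*K) ≤ C * (((1-t)/v) * φ u + t * Real.exp (-2*K)) := by
    intro u hu
    have hGu : 0 < G u := hGpos u hu
    have hsmem := haff u hu
    have hGs : 0 < G ((1-t)*u + t*K) := hGpos _ hsmem
    -- log-convexity
    have hconv := hGlc.2 hu hKmem h1t.le ht0 (by ring)
    simp only [smul_eq_mul] at hconv
    have hGle : G ((1-t)*u + t*K) ≤ (G u) ^ (1-t) * (G K) ^ t := by
      calc G ((1-t)*u + t*K) = Real.exp (Real.log (G ((1-t)*u + t*K))) :=
            (Real.exp_log hGs).symm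
        _ ≤ Real.exp ((1-t) * Real.log (G u) + t * Real.log (G K)) :=
            Real.exp_le_exp.2 hconv
        _ = (G u) ^ (1-t) * (G K) ^ t := by
            rw [Real.exp_add, mul_comm (1-t) _, mul_comm t _, Real.exp_mul, Real.exp_mul,
              Real.exp_log hGu, Real.exp_log hGK]
    have hexps : Real.exp (-2*((1-t)*u + t*K))
        = (Real.exp (-2*u)) ^ (1-t) * (Real.exp (-2*K)) ^ t := by
      rw [← Real.exp_mul, ← Real.exp_mul, ← Real.exp_add]
      congr 1; ring
    have h1 : φ ((1-t)*u + t*K) ≤ (φ u) ^ (1-t) * (Real.exp (-2*K) * G K) ^ t := by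
      have : φ ((1-t)*u + t*K)
          ≤ (Real.exp (-2*u)) ^ (1-t) * (Real.exp (-2*K)) ^ t * ((G u) ^ (1-t) * (G K) ^ t) := by
        rw [hφ]; dsimp only
        rw [hexps]
        exact mul_le_mul_of_nonneg_left hGle (by positivity)
      calc φ ((1-t)*u + t*K)
          ≤ (Real.exp (-2*u)) ^ (1-t) * (Real.exp (-2*K)) ^ t * ((G u) ^ (1-t) * (G K) ^ t) := this
        _ = (φ u) ^ (1-t) * (Real.exp (-2*K) * G K) ^ t := by
            rw [hφ]; dsimp only
            rw [Real.mul_rpow (Real.exp_nonneg _) hGu.le,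
              Real.mul_rpow (Real.exp_nonneg _) hGK.le]
            ring
    -- weighted AM-GM against (v, G K)
    have hφu0 : 0 ≤ φ u := (hφpos u hu).le
    have hamgm : (φ u / v) ^ (1-t) * (Real.exp (-2*K)) ^ t
        ≤ (1-t) * (φ u / v) + t * Real.exp (-2*K) :=
      Real.geom_mean_le_arith_mean2_weighted h1t.le ht0 (div_nonneg hφu0 hv0.le)
        (Real.exp_nonneg _) (by ring)
    have hsplit : (φ u) ^ (1-t) * (Real.exp (-2*K) * G K) ^ t
        = C * ((φ u / v) ^ (1-t) * (Real.exp (-2*K)) ^ t) := by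
      have e2 : (φ u) ^ (1-t) = v ^ (1-t) * (φ u / v) ^ (1-t) := by
        rw [Real.div_rpow hφu0 hv0.le]
        field_simp
      rw [e2, Real.mul_rpow (Real.exp_nonneg _) hGK.le, hC]
      ring
    calc φ ((1-t)*u + t*K) ≤ (φ u) ^ (1-t) * (Real.exp (-2*K) * G K) ^ t := h1
      _ = C * ((φ u / v) ^ (1-t) * (Real.exp (-2*K)) ^ t) := hsplit
      _ ≤ C * ((1-t) * (φ u / v) + t * Real.exp (-2*K)) :=
          mul_le_mul_of_nonneg_left hamgm hC0
      _ = C * (((1-t)/v) * φ u + t * Real.exp (-2*K)) := by ring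
  -- integrability of the composed function
  have hcomp_int : IntervalIntegrable (fun u => φ ((1-t)*u + t*K)) MeasureTheory.volume 0 K := by
    have hGaff : AntitoneOn (fun u => G ((1-t)*u + t*K)) (Set.uIcc (0:ℝ) K) := by
      intro x hx y hy hxy
      rw [Set.uIcc_of_le hK0.le] at hx hy
      exact hGdec (haff x hx) (haff y hy) (by nlinarith)
    have := (hGaff.intervalIntegrable (μ := MeasureTheory.volume)).continuousOn_mul
      (g := fun u => Real.exp (-2*((1-t)*u + t*K)))
      (Real.continuous_exp.comp (by continuity)).continuousOn
    exact this
  have hrhs_int : IntervalIntegrable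
      (fun u => C * (((1-t)/v) * φ u + t * Real.exp (-2*K))) MeasureTheory.volume 0 K :=
    (((hφint 0 K hmem0 hKmem).const_mul _).add intervalIntegrable_const).const_mul _
  -- integral comparison
  set I : ℝ := ∫ u in (0:ℝ)..K, φ ((1-t)*u + t*K) with hI
  have hIle : I ≤ C * ((1-t) + t * K * Real.exp (-2*K)) := by
    have h2 : I ≤ ∫ u in (0:ℝ)..K, C * (((1-t)/v) * φ u + t * Real.exp (-2*K)) :=
      intervalIntegral.integral_mono_on hK0.le hcomp_int hrhs_int hpt
    have h3 : (∫ u in (0:ℝ)..K, C * (((1-t)/v) * φ u + t * Real.exp (-2*K)))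
        = C * ((1-t) + t * K * Real.exp (-2*K)) := by
      rw [intervalIntegral.integral_const_mul,
        intervalIntegral.integral_add ((hφint 0 K hmem0 hKmem).const_mul _)
          intervalIntegrable_const,
        intervalIntegral.integral_const_mul, intervalIntegral.integral_const, ← hv]
      rw [smul_eq_mul, div_mul_cancel₀ _ hv0.ne']
      ring
    linarith [h2, h3.le, h3.ge]
  -- change of variables
  have hcov : (∫ s in r..K, φ s) = (1-t) * I := by
    have e1 : (1-t)*0 + t*K = r := by rw [htK]; ring
    have e2 : (1-t)*K + t*K = K := by ring
    have h := intervalIntegral.smul_integral_comp_mul_add (a := 0) (b := K) φ (1-t) (t*K)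
    rw [e1, e2, smul_eq_mul] at h
    exact h.symm
  -- split the integral
  have hsplitv : (∫ s in (0:ℝ)..r, φ s) + (∫ s in r..K, φ s) = v := by
    rw [hv]
    exact intervalIntegral.integral_add_adjacent_intervals
      (hφint 0 r hmem0 hrmem) (hφint r K hrmem hKmem)
  -- K e^{-2K} ≤ 1
  have hKexp : K * Real.exp (-2*K) ≤ 1 := by
    have h : K ≤ Real.exp (2*K) := by nlinarith [Real.add_one_le_exp (2*K), hK0]
    rw [show (-2*K : ℝ) = -(2*K) by ring, Real.exp_neg, ← div_eq_mul_inv]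
    exact (div_le_one (Real.exp_pos _)).2 h
  -- final algebra
  have hCeq : v * (G K / v) ^ t = C := by
    rw [Real.div_rpow hGK.le hv0.le, hC, Real.rpow_sub hv0, Real.rpow_one]
    ring
  have hint0r : (∫ s in (0:ℝ)..r, φ s) = v - (1-t) * I := by
    rw [← hcov]; linarith [hsplitv]
  clear_value t φ C I
  have hB0 : 0 ≤ (1-t) + t * K * Real.exp (-2*K) :=
    add_nonneg h1t.le (mul_nonneg (mul_nonneg ht0 hK0.le) (Real.exp_nonneg _))
  have hB1 : (1-t) + t * K * Real.exp (-2*K) ≤ 1 := by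
    have := mul_le_mul_of_nonneg_left hKexp ht0
    linarith [this]
  have h7 : (1-t) * ((1-t) + t * K * Real.exp (-2*K)) ≤ 1 :=
    mul_le_one₀ (by linarith) hB0 hB1
  have hfin : (1-t) * I ≤ C := by
    have h8 := mul_le_mul_of_nonneg_left hIle h1t.le
    have h9 : (1-t) * (C * ((1-t) + t * K * Real.exp (-2*K)))
        = ((1-t) * ((1-t) + t * K * Real.exp (-2*K))) * C := by ring
    have h10 := mul_le_mul_of_nonneg_right h7 hC0
    rw [h9] at h8
    linarith
  rw [hint0r]
  linarith [hCeq, hfin]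
end
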